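/- Suppose d ≠ 0 and r ≥ (1 + d/b^R)·max{1, e^{-Td}}. Then φ'(t) ≥ 0 for all t ∈ [0,T], i.e., φ is monotone non-decreasing on [0,T]. -/

import Mathlib

open Real Set

theorem phi_monotone_increasing (T bR r d : ℝ) (hT : 0 < T) (hbR : 0 < bR) (hr : 0 < r)
    (hd : d ≠ 0) (hhyp : (1 + d / bR) * max 1 (Real.exp (-T * d)) ≤ r) :
    (∀ t ∈ Set.Icc (0 : ℝ) T,
      0 ≤ bR * Real.exp (-bR * (T - t)) - (bR + d) / r * Real.exp (-(bR + d) * (T - t))) ∧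
    MonotoneOn
      (fun t : ℝ => Real.exp (-bR * (T - t)) - (1 / r) * Real.exp (-(bR + d) * (T - t)))
      (Set.Icc 0 T) := by
  have key : ∀ t ∈ Set.Icc (0 : ℝ) T,
      0 ≤ bR * Real.exp (-bR * (T - t)) - (bR + d) / r * Real.exp (-(bR + d) * (T - t)) := by
    intro t ht
    obtain ⟨ht0, htT⟩ := ht
    rcases le_or_gt (bR + d) 0 with h | h
    · have h1 : (bR + d) / r * Real.exp (-(bR + d) * (T - t)) ≤ 0 :=
        mul_nonpos_of_nonpos_of_nonneg (div_nonpos_of_nonpos_of_nonneg h hr.le)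
          (Real.exp_nonneg _)
      nlinarith [Real.exp_pos (-bR * (T - t)), mul_pos hbR (Real.exp_pos (-bR * (T - t)))]
    · -- key inequality: (bR+d) * exp(-d*(T-t)) ≤ r * bR
      have hs0 : 0 ≤ T - t := by linarith
      have hed : Real.exp (-d * (T - t)) ≤ max 1 (Real.exp (-T * d)) := by
        rcases lt_or_gt_of_ne hd with hdneg | hdpos
        · have : -d * (T - t) ≤ -d * T := by nlinarith
          calc Real.exp (-d * (T - t)) ≤ Real.exp (-T * d) := by
                apply Real.exp_le_exp.mpr; linarith [this]; 
            _ ≤ max 1 (Real.exp (-T * d)) := le_max_right _ _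
        · have : -d * (T - t) ≤ 0 := by nlinarith
          calc Real.exp (-d * (T - t)) ≤ 1 := Real.exp_le_one_iff.mpr this
            _ ≤ _ := le_max_left _ _
      have hcoef : 0 < 1 + d / bR := by
        have : (bR + d) / bR > 0 := div_pos h hbR
        have heq : 1 + d / bR = (bR + d) / bR := by field_simp
        linarith [heq ▸ this]
      have hmain : (1 + d / bR) * Real.exp (-d * (T - t)) ≤ r :=
        le_trans (mul_le_mul_of_nonneg_left hed hcoef.le) hhyp
      -- so (bR + d) * exp(-d*(T-t)) ≤ r * bR
      have h2 : (bR + d) * Real.exp (-d * (T - t)) ≤ r * bR := by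
        have heq : 1 + d / bR = (bR + d) / bR := by field_simp
        rw [heq] at hmain
        rw [div_mul_eq_mul_div, div_le_iff₀ hbR] at hmain
        linarith
      -- exp(-(bR+d)*(T-t)) = exp(-bR*(T-t)) * exp(-d*(T-t))
      have hexp : Real.exp (-(bR + d) * (T - t)) =
          Real.exp (-bR * (T - t)) * Real.exp (-d * (T - t)) := by
        rw [← Real.exp_add]; ring_nf
      rw [sub_nonneg, hexp, div_mul_eq_mul_div, div_le_iff₀ hr]
      have := mul_le_mul_of_nonneg_left h2 (Real.exp_nonneg (-bR * (T - t)))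
      nlinarith [Real.exp_pos (-bR * (T - t))]
  refine ⟨key, ?_⟩
  have hderiv : ∀ x : ℝ, HasDerivAt
      (fun t : ℝ => Real.exp (-bR * (T - t)) - (1 / r) * Real.exp (-(bR + d) * (T - t)))
      (bR * Real.exp (-bR * (T - x)) - (bR + d) / r * Real.exp (-(bR + d) * (T - x))) x := by
    intro x
    have h1 : HasDerivAt (fun t : ℝ => -bR * (T - t)) bR x := by
      have := ((hasDerivAt_id x).const_sub T).const_mul (-bR)
      simpa using this
    have h2 : HasDerivAt (fun t : ℝ => -(bR + d) * (T - t)) (bR + d) x := by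
      have := ((hasDerivAt_id x).const_sub T).const_mul (-(bR + d))
      simpa using this
    have := (h1.exp).sub ((h2.exp).const_mul (1 / r))
    refine this.congr_deriv ?_
    ring
  apply monotoneOn_of_deriv_nonneg (convex_Icc 0 T)
  · exact Continuous.continuousOn (by continuity)
  · intro x hx
    exact (hderiv x).differentiableAt.differentiableWithinAt
  · intro x hx
    rw [interior_Icc] at hx
    rw [(hderiv x).deriv]
    exact key x ⟨hx.1.le, hx.2.le⟩
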